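/- The matrix absolute value map M ↦ |M| := (M*M)^{1/2} on n×n complex matrices is Lipschitz continuous with respect to the Hilbert–Schmidt norm when restricted to Hermitian matrices; i.e., there is a constant C such that ‖|A| − |B|‖_HS ≤ C·‖A − B‖_HS for all Hermitian A, B. -/

import Mathlib

open Matrix ComplexOrder

/-- The Hilbert–Schmidt (Frobenius) norm: `‖M‖² = ∑_{i,j} |M_{ij}|² = tr(M*M)`. -/
noncomputable def hsNorm {n : ℕ} (M : Matrix (Fin n) (Fin n) ℂ) : ℝ :=
  Real.sqrt (∑ i, ∑ j, Complex.normSq (M i j))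

/-- The matrix absolute value `|M| := (M*M)^{1/2}`, the unique positive semidefinite
square root of `M*M = Mᴴ * M`. -/
noncomputable def matAbs {n : ℕ} (M : Matrix (Fin n) (Fin n) ℂ) : Matrix (Fin n) (Fin n) ℂ :=
  ((Matrix.posSemidef_conjTranspose_mul_self M).1.eigenvectorUnitary : Matrix (Fin n) (Fin n) ℂ) *
    diagonal ((↑) ∘ Real.sqrt ∘ (Matrix.posSemidef_conjTranspose_mul_self M).1.eigenvalues) *
    (star ((Matrix.posSemidef_conjTranspose_mul_self M).1.eigenvectorUnitary : Matrix (Fin n) (Fin n) ℂ))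

section aux
variable {n : ℕ}

noncomputable def hsNormSq (M : Matrix (Fin n) (Fin n) ℂ) : ℝ :=
  ∑ i, ∑ j, Complex.normSq (M i j)

lemma hsNorm_eq (M : Matrix (Fin n) (Fin n) ℂ) : hsNorm M = Real.sqrt (hsNormSq M) := rfl

lemma hsNormSq_eq_trace (M : Matrix (Fin n) (Fin n) ℂ) :
    (hsNormSq M : ℂ) = Matrix.trace (Mᴴ * M) := by
  simp only [hsNormSq, Matrix.trace, Matrix.diag, Matrix.mul_apply, Matrix.conjTranspose_apply]
  push_cast
  rw [Finset.sum_comm]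
  congr 1; ext i; congr 1; ext j
  rw [Complex.normSq_eq_conj_mul_self]
  rfl

lemma hsNormSq_conj (U V : Matrix.unitaryGroup (Fin n) ℂ) (M : Matrix (Fin n) (Fin n) ℂ) :
    hsNormSq (star (U : Matrix (Fin n) (Fin n) ℂ) * M * (V : Matrix (Fin n) (Fin n) ℂ))
      = hsNormSq M := by
  set Uc := (U : Matrix (Fin n) (Fin n) ℂ)
  set Vc := (V : Matrix (Fin n) (Fin n) ℂ)
  have h : (hsNormSq (star Uc * M * Vc) : ℂ) = (hsNormSq M : ℂ) := by
    rw [hsNormSq_eq_trace, hsNormSq_eq_trace]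
    rw [Matrix.conjTranspose_mul, Matrix.conjTranspose_mul]
    have hU : Uc * star Uc = 1 := U.2.2
    have hV : Vc * Vcᴴ = 1 := V.2.2
    have hst : (star Uc)ᴴ = Uc := by simp [Matrix.star_eq_conjTranspose]
    rw [hst]
    rw [show Vcᴴ * (Mᴴ * Uc) * (star Uc * M * Vc) = Vcᴴ * (Mᴴ * M) * Vc by
      simp only [Matrix.mul_assoc]
      rw [← Matrix.mul_assoc Uc (star Uc), hU, Matrix.one_mul]]
    rw [Matrix.trace_mul_comm, ← Matrix.mul_assoc, hV, Matrix.one_mul]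
  exact_mod_cast h

lemma conj_sq (U : Matrix.unitaryGroup (Fin n) ℂ) (d : Fin n → ℂ) :
    ((U : Matrix (Fin n) (Fin n) ℂ) * Matrix.diagonal d * star (U : Matrix (Fin n) (Fin n) ℂ)) ^ 2
      = (U : Matrix (Fin n) (Fin n) ℂ) * Matrix.diagonal (fun i => d i * d i) *
        star (U : Matrix (Fin n) (Fin n) ℂ) := by
  set Uc := (U : Matrix (Fin n) (Fin n) ℂ)
  have hU : star Uc * Uc = 1 := U.2.1
  rw [pow_two]
  calc Uc * Matrix.diagonal d * star Uc * (Uc * Matrix.diagonal d * star Uc)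
      = Uc * (Matrix.diagonal d * ((star Uc * Uc) * (Matrix.diagonal d * star Uc))) := by
        simp only [Matrix.mul_assoc]
    _ = Uc * Matrix.diagonal (fun i => d i * d i) * star Uc := by
        rw [hU, Matrix.one_mul, ← Matrix.mul_assoc (Matrix.diagonal d),
          Matrix.diagonal_mul_diagonal, Matrix.mul_assoc]

lemma matAbs_hermitian {A : Matrix (Fin n) (Fin n) ℂ} (hA : A.IsHermitian) :
    matAbs A = (hA.eigenvectorUnitary : Matrix (Fin n) (Fin n) ℂ) *
      Matrix.diagonal (Complex.ofReal ∘ fun i => |hA.eigenvalues i|) *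
      star (hA.eigenvectorUnitary : Matrix (Fin n) (Fin n) ℂ) := by
  set Uc := (hA.eigenvectorUnitary : Matrix (Fin n) (Fin n) ℂ)
  set P := Uc * Matrix.diagonal (Complex.ofReal ∘ fun i => |hA.eigenvalues i|) * star Uc with hP
  have hPsd : P.PosSemidef := by
    have hd : (Matrix.diagonal (Complex.ofReal ∘ fun i => |hA.eigenvalues i|)).PosSemidef := by
      refine Matrix.posSemidef_diagonal_iff.mpr fun i => ?_
      simp only [Function.comp_apply]
      exact_mod_cast abs_nonneg _
    exact hd.mul_mul_conjTranspose_same Uc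
  have hAA : A * A = Uc * Matrix.diagonal
      (fun i => ((hA.eigenvalues i : ℂ)) * (hA.eigenvalues i : ℂ)) * star Uc := by
    have := congrArg (fun X : Matrix (Fin n) (Fin n) ℂ => X ^ 2) hA.spectral_theorem
    simp only [Unitary.conjStarAlgAut_apply, conj_sq] at this
    rw [pow_two] at this
    convert this using 2
    rfl
  have hsq : P ^ 2 = Aᴴ * A := by
    rw [hA.eq, hAA, hP, conj_sq hA.eigenvectorUnitary]
    have habs : ∀ i, |hA.eigenvalues i| * |hA.eigenvalues i|
        = hA.eigenvalues i * hA.eigenvalues i := fun i => abs_mul_abs_self _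
    simp only [Function.comp, ← Complex.ofReal_mul, habs]
    rfl
  open scoped MatrixOrder in
  have hAA' := (Matrix.posSemidef_conjTranspose_mul_self A).1
  have hc : matAbs A = cfc Real.sqrt (Aᴴ * A) := by
    rw [hAA'.cfc_eq, Matrix.IsHermitian.cfc, Unitary.conjStarAlgAut_apply]; rfl
  rw [hc, ← cfcₙ_eq_cfc, ← CFC.sqrt_eq_real_sqrt _ (Matrix.posSemidef_conjTranspose_mul_self A).nonneg]
  exact CFC.sqrt_unique (by rw [← pow_two]; exact hsq) hPsd.nonneg

end aux

theorem stmt7 :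
    ∃ C : ℝ, ∀ (n : ℕ) (A B : Matrix (Fin n) (Fin n) ℂ),
      A.IsHermitian → B.IsHermitian →
      hsNorm (matAbs A - matAbs B) ≤ C * hsNorm (A - B) := by
  refine ⟨1, fun n A B hA hB => ?_⟩
  rw [one_mul, hsNorm_eq, hsNorm_eq]
  apply Real.sqrt_le_sqrt
  set Uc := (hA.eigenvectorUnitary : Matrix (Fin n) (Fin n) ℂ)
  set Vc := (hB.eigenvectorUnitary : Matrix (Fin n) (Fin n) ℂ)
  set W := star Uc * Vc with hW
  have hUU : star Uc * Uc = 1 := hA.eigenvectorUnitary.2.1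
  have hVV : star Vc * Vc = 1 := hB.eigenvectorUnitary.2.1
  have key : ∀ (d e : Fin n → ℝ),
      star Uc * (Uc * Matrix.diagonal (Complex.ofReal ∘ d) * star Uc
        - Vc * Matrix.diagonal (Complex.ofReal ∘ e) * star Vc) * Vc
      = Matrix.diagonal (Complex.ofReal ∘ d) * W - W * Matrix.diagonal (Complex.ofReal ∘ e) := by
    intro d e
    rw [Matrix.mul_sub, Matrix.sub_mul]
    congr 1
    · simp only [Matrix.mul_assoc, ← Matrix.mul_assoc (star Uc) Uc, hUU, Matrix.one_mul, hW]
    · simp only [Matrix.mul_assoc, hW]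
      rw [hVV, Matrix.mul_one]
  -- entrywise sum bound
  have entry : ∀ (d e : Fin n → ℝ),
      hsNormSq (Matrix.diagonal (Complex.ofReal ∘ d) * W - W * Matrix.diagonal (Complex.ofReal ∘ e))
        = ∑ i, ∑ j, (d i - e j) ^ 2 * Complex.normSq (W i j) := by
    intro d e
    unfold hsNormSq
    refine Finset.sum_congr rfl fun i _ => Finset.sum_congr rfl fun j _ => ?_
    rw [Matrix.sub_apply, Matrix.diagonal_mul, Matrix.mul_diagonal]
    have : (Complex.ofReal ∘ d) i * W i j - W i j * (Complex.ofReal ∘ e) j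
        = ((d i - e j : ℝ) : ℂ) * W i j := by
      simp only [Function.comp_apply]
      push_cast
      ring
    rw [this, Complex.normSq_mul, Complex.normSq_ofReal, sq]
  -- rewrite both sides via unitary conjugation
  have LHS : hsNormSq (matAbs A - matAbs B)
      = ∑ i, ∑ j, (|hA.eigenvalues i| - |hB.eigenvalues j|) ^ 2 * Complex.normSq (W i j) := by
    rw [← hsNormSq_conj hA.eigenvectorUnitary hB.eigenvectorUnitary,
      matAbs_hermitian hA, matAbs_hermitian hB, key, entry]
  have RHS : hsNormSq (A - B)
      = ∑ i, ∑ j, (hA.eigenvalues i - hB.eigenvalues j) ^ 2 * Complex.normSq (W i j) := by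
    rw [← hsNormSq_conj hA.eigenvectorUnitary hB.eigenvectorUnitary]
    have hAe : A = Uc * Matrix.diagonal (Complex.ofReal ∘ hA.eigenvalues) * star Uc :=
      hA.spectral_theorem
    have hBe : B = Vc * Matrix.diagonal (Complex.ofReal ∘ hB.eigenvalues) * star Vc :=
      hB.spectral_theorem
    rw [show star Uc * (A - B) * Vc
        = star Uc * (Uc * Matrix.diagonal (Complex.ofReal ∘ hA.eigenvalues) * star Uc
          - Vc * Matrix.diagonal (Complex.ofReal ∘ hB.eigenvalues) * star Vc) * Vc by
      rw [← hAe, ← hBe]]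
    rw [key, entry]
  rw [LHS, RHS]
  refine Finset.sum_le_sum fun i _ => Finset.sum_le_sum fun j _ => ?_
  have h1 : (|hA.eigenvalues i| - |hB.eigenvalues j|) ^ 2
      ≤ (hA.eigenvalues i - hB.eigenvalues j) ^ 2 := by
    rw [← sq_abs (|hA.eigenvalues i| - |hB.eigenvalues j|),
      ← sq_abs (hA.eigenvalues i - hB.eigenvalues j)]
    exact pow_le_pow_left₀ (abs_nonneg _) (abs_abs_sub_abs_le_abs_sub _ _) 2
  exact mul_le_mul_of_nonneg_right h1 (Complex.normSq_nonneg _)
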